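/- Let μ ∈ (0,1) and consider the planar case n = 2, with E = (μ,0), M = (μ−1,0), and effective potential U(q) = −(1−μ)/|q−E| − μ/|q−M| − (1/2)(q₁² + q₂²) on ℝ² \ {E,M}. Then there exist real numbers x₁ ∈ (μ−1, μ), x₂ ∈ (μ, ∞) and x₃ ∈ (−∞, μ−1) such that each of the points (x₁,0), (x₂,0), (x₃,0) is a critical point of U. (These are the collinear Lagrange points L₁, L₂, L₃: L₁ lies between the moon M and the earth E, L₂ to the right of E, and L₃ to the left of M.) -/

import Mathlib

/-- A point of the plane `ℝ² = EuclideanSpace ℝ (Fin 2)` with given coordinates. -/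
noncomputable def planePt (a b : ℝ) : EuclideanSpace ℝ (Fin 2) := WithLp.toLp 2 ![a, b]

/-- The effective potential of the planar circular restricted three body problem with
mass ratio `μ`, where `E = (μ,0)` and `M = (μ−1,0)`:
`U(q) = −(1−μ)/|q−E| − μ/|q−M| − (1/2)(q₁² + q₂²)`. -/
noncomputable def effPotential2 (μ : ℝ) (q : EuclideanSpace ℝ (Fin 2)) : ℝ :=
  -((1 - μ) / ‖q - planePt μ 0‖) - μ / ‖q - planePt (μ - 1) 0‖
    - (1 / 2) * (q 0 ^ 2 + q 1 ^ 2)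

lemma norm_sub_planePt (c : ℝ) (q : EuclideanSpace ℝ (Fin 2)) :
    ‖q - planePt c 0‖ = Real.sqrt ((q 0 - c)^2 + q 1^2) := by
  rw [EuclideanSpace.norm_eq]
  congr 1
  rw [Fin.sum_univ_two]
  simp [planePt, sq_abs]

noncomputable def gfun (μ x : ℝ) : ℝ :=
  (1-μ)*(x-μ)/|x-μ|^3 + μ*(x-μ+1)/|x-μ+1|^3 - x

lemma hasFDerivAt_coord (i : Fin 2) (p : EuclideanSpace ℝ (Fin 2)) :
    HasFDerivAt (fun q : EuclideanSpace ℝ (Fin 2) => q i)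
      (EuclideanSpace.proj i : EuclideanSpace ℝ (Fin 2) →L[ℝ] ℝ) p :=
  (EuclideanSpace.proj i : EuclideanSpace ℝ (Fin 2) →L[ℝ] ℝ).hasFDerivAt

lemma coefsimp (a r : ℝ) (hr : r ≠ 0) :
    (-a * (-(1 / (2 * Real.sqrt (r^2))) / (Real.sqrt (r^2))^2)) * (2*r) = a*r/|r|^3 := by
  rw [Real.sqrt_sq_eq_abs]
  have h : |r| ≠ 0 := abs_ne_zero.mpr hr
  field_simp

lemma effPotential2_hasFDerivAt (μ x : ℝ) (h1 : x ≠ μ) (h2 : x ≠ μ - 1) :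
    HasFDerivAt (effPotential2 μ)
      ((gfun μ x) • (EuclideanSpace.proj 0 : EuclideanSpace ℝ (Fin 2) →L[ℝ] ℝ))
      (planePt x 0) := by
  set p : EuclideanSpace ℝ (Fin 2) := planePt x 0 with hp
  have hp0 : p 0 = x := rfl
  have hp1 : p 1 = (0:ℝ) := rfl
  -- inner squared-distance functions
  have hphi : ∀ c : ℝ, HasFDerivAt (fun q : EuclideanSpace ℝ (Fin 2) => (q 0 - c)^2 + q 1 ^ 2)
      ((2*(x - c)) • (EuclideanSpace.proj 0 : EuclideanSpace ℝ (Fin 2) →L[ℝ] ℝ)) p := by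
    intro c
    have ha := (hasDerivAt_pow 2 (x - c)).comp_hasFDerivAt_of_eq p
      ((hasFDerivAt_coord 0 p).sub_const c) (by rw [hp0])
    have hb := (hasDerivAt_pow 2 (0:ℝ)).comp_hasFDerivAt_of_eq p
      (hasFDerivAt_coord 1 p) (by rw [hp1])
    have h := ha.add hb
    exact h.congr_fderiv (by simp)
  -- outer scalar function
  have houter : ∀ a s : ℝ, 0 < s → HasDerivAt (fun t : ℝ => a * (Real.sqrt t)⁻¹)
      (a * (-(1 / (2 * Real.sqrt s)) / (Real.sqrt s)^2)) s := by
    intro a s hs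
    have hd : HasDerivAt Real.sqrt (1/(2*Real.sqrt s)) s := Real.hasDerivAt_sqrt hs.ne'
    exact (hd.inv (Real.sqrt_ne_zero'.mpr hs)).const_mul a
  have hT : ∀ c a : ℝ, x ≠ c →
      HasFDerivAt (fun q : EuclideanSpace ℝ (Fin 2) => a * (Real.sqrt ((q 0 - c)^2 + q 1^2))⁻¹)
        ((a * (-(1 / (2 * Real.sqrt ((x-c)^2))) / (Real.sqrt ((x-c)^2))^2)) •
          ((2*(x - c)) • (EuclideanSpace.proj 0 : EuclideanSpace ℝ (Fin 2) →L[ℝ] ℝ))) p := by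
    intro c a hc
    have hpos : (0:ℝ) < (x - c)^2 :=
      lt_of_le_of_ne (sq_nonneg _) (Ne.symm (pow_ne_zero 2 (sub_ne_zero.mpr hc)))
    exact (houter a ((x-c)^2) hpos).comp_hasFDerivAt_of_eq p (hphi c) (by rw [hp0, hp1]; ring)
  have hT1 := hT μ (-(1-μ)) h1
  have hT2 := hT (μ-1) (-μ) (by intro h; exact h2 h)
  have hphi0 : HasFDerivAt (fun q : EuclideanSpace ℝ (Fin 2) => q 0 ^ 2 + q 1 ^ 2)
      ((2*x) • (EuclideanSpace.proj 0 : EuclideanSpace ℝ (Fin 2) →L[ℝ] ℝ)) p := by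
    have ha := (hasDerivAt_pow 2 x).comp_hasFDerivAt_of_eq p (hasFDerivAt_coord 0 p) (by rw [hp0])
    have hb := (hasDerivAt_pow 2 (0:ℝ)).comp_hasFDerivAt_of_eq p (hasFDerivAt_coord 1 p) (by rw [hp1])
    exact (ha.add hb).congr_fderiv (by simp)
  have hT3 := hphi0.const_mul (-(1/2) : ℝ)
  have Htot := (hT1.add hT2).add hT3
  have hfun : effPotential2 μ = fun q : EuclideanSpace ℝ (Fin 2) =>
      ((-(1-μ)) * (Real.sqrt ((q 0 - μ)^2 + q 1^2))⁻¹ +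
        (-μ) * (Real.sqrt ((q 0 - (μ-1))^2 + q 1^2))⁻¹) +
        (-(1/2)) * (q 0 ^ 2 + q 1 ^ 2) := by
    funext q
    simp only [effPotential2, norm_sub_planePt]
    rw [div_eq_mul_inv, div_eq_mul_inv]
    ring
  rw [hfun]
  refine Htot.congr_fderiv ?_
  rw [smul_smul, smul_smul, smul_smul, ← add_smul, ← add_smul]
  congr 1
  have e1 := coefsimp (1-μ) (x-μ) (sub_ne_zero.mpr h1)
  have e2 := coefsimp μ (x-(μ-1)) (sub_ne_zero.mpr (fun h => h2 h))
  rw [e1, e2]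
  have hxx : x - (μ - 1) = x - μ + 1 := by ring
  rw [gfun, hxx]
  ring

lemma gfun_continuousOn (μ : ℝ) :
    ContinuousOn (gfun μ) {x : ℝ | x ≠ μ ∧ x ≠ μ - 1} := by
  apply ContinuousOn.sub
  · apply ContinuousOn.add
    · exact ContinuousOn.div (by fun_prop) (by fun_prop)
        (fun x hx => pow_ne_zero _ (abs_ne_zero.mpr (sub_ne_zero.mpr hx.1)))
    · refine ContinuousOn.div (by fun_prop) (by fun_prop) ?_
      intro x hx
      refine pow_ne_zero _ (abs_ne_zero.mpr ?_)
      intro h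
      exact hx.2 (by linarith)
  · exact continuousOn_id

lemma exists_root_I1 (μ : ℝ) (hμ0 : 0 < μ) (hμ1 : μ < 1) :
    ∃ x ∈ Set.Ioo (μ - 1) μ, gfun μ x = 0 := by
  have hab : μ - 1 + μ/2 ≤ μ - (1-μ)/2 := by linarith
  have hsub : Set.Icc (μ - 1 + μ/2) (μ - (1-μ)/2) ⊆ {x : ℝ | x ≠ μ ∧ x ≠ μ - 1} := by
    rintro x ⟨hx1, hx2⟩
    exact ⟨by intro h; rw [h] at hx2; linarith, by intro h; rw [h] at hx1; linarith⟩
  have hcont := (gfun_continuousOn μ).mono hsub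
  -- value at left endpoint
  have e1 : |(μ - 1 + μ/2) - μ| = 1 - μ/2 := by rw [abs_of_neg (by linarith)]; ring
  have e2 : |(μ - 1 + μ/2) - μ + 1| = μ/2 := by rw [abs_of_pos (by linarith)]; ring
  have d1 : (1:ℝ) - μ/2 ≠ 0 := by intro h; linarith
  have d2 : μ/2 ≠ 0 := by intro h; linarith
  have d3 : (2:ℝ) - μ ≠ 0 := by intro h; linarith
  have hμ0' : μ ≠ 0 := ne_of_gt hμ0
  have hva : gfun μ (μ - 1 + μ/2)
      = (μ*(-3*μ^4+14*μ^3-4*μ^2-32*μ+32)) / (2*μ^2*(2-μ)^2) := by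
    rw [gfun, e1, e2]
    field_simp
    ring
  have hga : 0 < gfun μ (μ - 1 + μ/2) := by
    rw [hva]
    apply div_pos
    · apply mul_pos hμ0
      nlinarith [sq_nonneg μ, sq_nonneg (1-μ), sq_nonneg (μ*(1-μ))]
    · have : (0:ℝ) < μ^2 := pow_pos hμ0 2
      have : (0:ℝ) < (2-μ)^2 := pow_pos (by linarith) 2
      nlinarith [pow_pos hμ0 2, pow_pos (show (0:ℝ) < 2 - μ by linarith) 2]
  -- value at right endpoint
  have f1 : |(μ - (1-μ)/2) - μ| = (1-μ)/2 := by rw [abs_of_neg (by linarith)]; ring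
  have f2 : |(μ - (1-μ)/2) - μ + 1| = (1+μ)/2 := by rw [abs_of_pos (by linarith)]; ring
  have c1 : ((1:ℝ)-μ)/2 ≠ 0 := by intro h; linarith
  have c2 : ((1:ℝ)+μ)/2 ≠ 0 := by intro h; linarith
  have c3 : (1:ℝ) - μ ≠ 0 := by intro h; linarith
  have c4 : (1:ℝ) + μ ≠ 0 := by intro h; linarith
  have hvb : gfun μ (μ - (1-μ)/2)
      = ((μ-1)*(-3*μ^4-2*μ^3+20*μ^2+10*μ+7)) / (2*(1-μ)^2*(1+μ)^2) := by
    rw [gfun, f1, f2]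
    field_simp
    ring
  have hgb : gfun μ (μ - (1-μ)/2) < 0 := by
    rw [hvb]
    apply div_neg_of_neg_of_pos
    · apply mul_neg_of_neg_of_pos (by linarith)
      nlinarith [sq_nonneg μ, pow_pos hμ0 3, pow_pos hμ0 4]
    · have h1 : (0:ℝ) < (1-μ)^2 := pow_pos (by linarith) 2
      have h2 : (0:ℝ) < (1+μ)^2 := pow_pos (by linarith) 2
      nlinarith
  have hmem : (0:ℝ) ∈ Set.Icc (gfun μ (μ - (1-μ)/2)) (gfun μ (μ - 1 + μ/2)) :=
    ⟨hgb.le, hga.le⟩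
  obtain ⟨x, hx, hgx⟩ := intermediate_value_Icc' hab hcont hmem
  exact ⟨x, ⟨by linarith [hx.1], by linarith [hx.2]⟩, hgx⟩

lemma exists_root_I2 (μ : ℝ) (hμ0 : 0 < μ) (hμ1 : μ < 1) :
    ∃ x ∈ Set.Ioi μ, gfun μ x = 0 := by
  have hab : μ + (1-μ)/2 ≤ (2:ℝ) := by linarith
  have hsub : Set.Icc (μ + (1-μ)/2) (2:ℝ) ⊆ {x : ℝ | x ≠ μ ∧ x ≠ μ - 1} := by
    rintro x ⟨hx1, hx2⟩
    exact ⟨by intro h; rw [h] at hx1; linarith, by intro h; rw [h] at hx1; linarith⟩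
  have hcont := (gfun_continuousOn μ).mono hsub
  have e1 : |(μ + (1-μ)/2) - μ| = (1-μ)/2 := by rw [abs_of_pos (by linarith)]; ring
  have e2 : |(μ + (1-μ)/2) - μ + 1| = (3-μ)/2 := by rw [abs_of_pos (by linarith)]; ring
  have d1 : ((1:ℝ)-μ)/2 ≠ 0 := by intro h; linarith
  have d2 : ((3:ℝ)-μ)/2 ≠ 0 := by intro h; linarith
  have d3 : (1:ℝ) - μ ≠ 0 := by intro h; linarith
  have d4 : (3:ℝ) - μ ≠ 0 := by intro h; linarith
  have hva : gfun μ (μ + (1-μ)/2)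
      = ((μ-1)*(-μ^4+6*μ^3-8*μ^2+34*μ-63)) / (2*(1-μ)^2*(3-μ)^2) := by
    rw [gfun, e1, e2]
    field_simp
    ring
  have hga : 0 < gfun μ (μ + (1-μ)/2) := by
    rw [hva]
    apply div_pos
    · apply mul_pos_of_neg_of_neg (by linarith)
      nlinarith [pow_pos hμ0 3, pow_pos hμ0 4, sq_nonneg μ]
    · have h1 : (0:ℝ) < (1-μ)^2 := pow_pos (by linarith) 2
      have h2 : (0:ℝ) < (3-μ)^2 := pow_pos (by linarith) 2
      nlinarith
  have f1 : |(2:ℝ) - μ| = 2 - μ := by rw [abs_of_pos (by linarith)]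
  have f2 : |(2:ℝ) - μ + 1| = 3 - μ := by rw [abs_of_pos (by linarith)]; ring
  have hvb : gfun μ 2
      = (-2*μ^4+20*μ^3-71*μ^2+109*μ-63) / ((2-μ)^2*(3-μ)^2) := by
    rw [gfun, f1, f2]
    have d5 : (2:ℝ) - μ ≠ 0 := by intro h; linarith
    field_simp
    ring
  have hgb : gfun μ 2 < 0 := by
    rw [hvb]
    apply div_neg_of_neg_of_pos
    · nlinarith [pow_pos hμ0 3, pow_pos hμ0 4, sq_nonneg μ, sq_nonneg (1-μ)]
    · have h1 : (0:ℝ) < (2-μ)^2 := pow_pos (by linarith) 2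
      have h2 : (0:ℝ) < (3-μ)^2 := pow_pos (by linarith) 2
      nlinarith
  have hmem : (0:ℝ) ∈ Set.Icc (gfun μ 2) (gfun μ (μ + (1-μ)/2)) := ⟨hgb.le, hga.le⟩
  obtain ⟨x, hx, hgx⟩ := intermediate_value_Icc' hab hcont hmem
  exact ⟨x, by simp only [Set.mem_Ioi]; linarith [hx.1], hgx⟩

lemma exists_root_I3 (μ : ℝ) (hμ0 : 0 < μ) (hμ1 : μ < 1) :
    ∃ x ∈ Set.Iio (μ - 1), gfun μ x = 0 := by
  have hab : (-2:ℝ) ≤ μ - 1 - μ/2 := by linarith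
  have hsub : Set.Icc (-2:ℝ) (μ - 1 - μ/2) ⊆ {x : ℝ | x ≠ μ ∧ x ≠ μ - 1} := by
    rintro x ⟨hx1, hx2⟩
    exact ⟨by intro h; rw [h] at hx2; linarith, by intro h; rw [h] at hx2; linarith⟩
  have hcont := (gfun_continuousOn μ).mono hsub
  have e1 : |(-2:ℝ) - μ| = 2 + μ := by rw [abs_of_neg (by linarith)]; ring
  have e2 : |(-2:ℝ) - μ + 1| = 1 + μ := by rw [abs_of_neg (by linarith)]; ring
  have d1 : (2:ℝ) + μ ≠ 0 := by intro h; linarith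
  have d2 : (1:ℝ) + μ ≠ 0 := by intro h; linarith
  have hva : gfun μ (-2)
      = (2*μ^4+12*μ^3+23*μ^2+19*μ+7) / ((1+μ)^2*(2+μ)^2) := by
    rw [gfun, e1, e2]
    field_simp
    ring
  have hga : 0 < gfun μ (-2) := by
    rw [hva]
    apply div_pos
    · nlinarith [pow_pos hμ0 3, pow_pos hμ0 4, pow_pos hμ0 2]
    · have h1 : (0:ℝ) < (1+μ)^2 := pow_pos (by linarith) 2
      have h2 : (0:ℝ) < (2+μ)^2 := pow_pos (by linarith) 2
      nlinarith
  have f1 : |(μ - 1 - μ/2) - μ| = 1 + μ/2 := by rw [abs_of_neg (by linarith)]; ring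
  have f2 : |(μ - 1 - μ/2) - μ + 1| = μ/2 := by rw [abs_of_neg (by linarith)]; ring
  have c1 : (1:ℝ) + μ/2 ≠ 0 := by intro h; linarith
  have c2 : μ/2 ≠ 0 := by intro h; linarith
  have c3 : μ ≠ 0 := ne_of_gt hμ0
  have hvb : gfun μ (μ - 1 - μ/2)
      = (μ*(-μ^4-2*μ^3+4*μ^2-32*μ-32)) / (2*μ^2*(2+μ)^2) := by
    rw [gfun, f1, f2]
    field_simp
    ring
  have hgb : gfun μ (μ - 1 - μ/2) < 0 := by
    rw [hvb]
    apply div_neg_of_neg_of_pos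
    · apply mul_neg_of_pos_of_neg hμ0
      nlinarith [pow_pos hμ0 3, pow_pos hμ0 4, sq_nonneg μ]
    · have h1 : (0:ℝ) < μ^2 := pow_pos hμ0 2
      have h2 : (0:ℝ) < (2+μ)^2 := pow_pos (by linarith) 2
      nlinarith
  have hmem : (0:ℝ) ∈ Set.Icc (gfun μ (μ - 1 - μ/2)) (gfun μ (-2)) := ⟨hgb.le, hga.le⟩
  obtain ⟨x, hx, hgx⟩ := intermediate_value_Icc' hab hcont hmem
  exact ⟨x, by simp only [Set.mem_Iio]; linarith [hx.2], hgx⟩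


lemma fderiv_zero_of_gfun_zero (μ x : ℝ) (h1 : x ≠ μ) (h2 : x ≠ μ - 1)
    (h : gfun μ x = 0) : fderiv ℝ (effPotential2 μ) (planePt x 0) = 0 := by
  have H := effPotential2_hasFDerivAt μ x h1 h2
  rw [h, zero_smul] at H
  exact H.fderiv

/-- Existence of the three collinear Lagrange points `L₁, L₂, L₃`: there are critical
points of the effective potential on the `q₁`-axis with first coordinate respectively
in `(μ−1, μ)` (between the moon and the earth), in `(μ, ∞)` (to the right of the earth)
and in `(−∞, μ−1)` (to the left of the moon). -/
theorem collinear_lagrange_points (μ : ℝ) (hμ : μ ∈ Set.Ioo (0 : ℝ) 1) :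
    ∃ x₁ ∈ Set.Ioo (μ - 1) μ, ∃ x₂ ∈ Set.Ioi μ, ∃ x₃ ∈ Set.Iio (μ - 1),
      fderiv ℝ (effPotential2 μ) (planePt x₁ 0) = 0 ∧
      fderiv ℝ (effPotential2 μ) (planePt x₂ 0) = 0 ∧
      fderiv ℝ (effPotential2 μ) (planePt x₃ 0) = 0 := by
  obtain ⟨hμ0, hμ1⟩ := hμ
  obtain ⟨x₁, hx₁, hg₁⟩ := exists_root_I1 μ hμ0 hμ1
  obtain ⟨x₂, hx₂, hg₂⟩ := exists_root_I2 μ hμ0 hμ1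
  obtain ⟨x₃, hx₃, hg₃⟩ := exists_root_I3 μ hμ0 hμ1
  refine ⟨x₁, hx₁, x₂, hx₂, x₃, hx₃, ?_, ?_, ?_⟩
  · exact fderiv_zero_of_gfun_zero μ x₁ (ne_of_lt hx₁.2)
      (ne_of_gt hx₁.1) hg₁
  · have h2 : μ < x₂ := hx₂
    exact fderiv_zero_of_gfun_zero μ x₂ (ne_of_gt h2)
      (by intro h; rw [h] at h2; linarith) hg₂
  · have h3 : x₃ < μ - 1 := hx₃
    exact fderiv_zero_of_gfun_zero μ x₃ (by intro h; rw [h] at h3; linarith)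
      (ne_of_lt h3) hg₃
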